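/- Let T_α be the Bellman optimality operator of a finite discounted MDP and define v¹(x) = max_{a ∈ A x} r x a. Then for every v⁰ : Fin m → ℝ, sp(T_α v⁰) ≤ sp(v¹) + α·sp(v⁰). -/
import Mathlib


open Finset

/-- Span seminorm `sp(u) = max_x u(x) - min_x u(x)` on `Fin m → ℝ`. -/
noncomputable def sp {m : ℕ} [NeZero m] (u : Fin m → ℝ) : ℝ :=
  (univ.sup' univ_nonempty u) - (univ.inf' univ_nonempty u)

/-- Bellman optimality operator of a finite discounted MDP. -/
noncomputable def bellman {m K : ℕ} (A : Fin m → Finset (Fin K))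
    (hA : ∀ x, (A x).Nonempty) (r : Fin m → Fin K → ℝ)
    (p : Fin m → Fin K → Fin m → ℝ) (α : ℝ) (v : Fin m → ℝ) : Fin m → ℝ :=
  fun x => (A x).sup' (hA x) (fun a => r x a + α * ∑ y, p x a y * v y)

theorem stmt4 {m K : ℕ} [NeZero m] (A : Fin m → Finset (Fin K))
    (hA : ∀ x, (A x).Nonempty) (r : Fin m → Fin K → ℝ)
    (p : Fin m → Fin K → Fin m → ℝ)
    (hp0 : ∀ x a y, a ∈ A x → 0 ≤ p x a y)
    (hp1 : ∀ x a, a ∈ A x → ∑ y, p x a y = 1)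
    (α : ℝ) (hα0 : 0 ≤ α) (hα1 : α < 1)
    (v0 : Fin m → ℝ) :
    sp (bellman A hA r p α v0) ≤ sp (fun x => (A x).sup' (hA x) (r x)) + α * sp v0 := by
  set M0 := univ.sup' univ_nonempty v0 with hM0
  set m0 := univ.inf' univ_nonempty v0 with hm0
  set v1 : Fin m → ℝ := fun x => (A x).sup' (hA x) (r x) with hv1
  have hsum_le : ∀ x a, a ∈ A x → ∑ y, p x a y * v0 y ≤ M0 := by
    intro x a ha
    calc ∑ y, p x a y * v0 y ≤ ∑ y, p x a y * M0 := by
          apply Finset.sum_le_sum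
          intro y _
          exact mul_le_mul_of_nonneg_left (Finset.le_sup' v0 (mem_univ y)) (hp0 x a y ha)
      _ = M0 := by rw [← Finset.sum_mul, hp1 x a ha, one_mul]
  have hsum_ge : ∀ x a, a ∈ A x → m0 ≤ ∑ y, p x a y * v0 y := by
    intro x a ha
    calc m0 = ∑ y, p x a y * m0 := by rw [← Finset.sum_mul, hp1 x a ha, one_mul]
      _ ≤ ∑ y, p x a y * v0 y := by
          apply Finset.sum_le_sum
          intro y _
          exact mul_le_mul_of_nonneg_left (Finset.inf'_le v0 (mem_univ y)) (hp0 x a y ha)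
  have hub : ∀ x, bellman A hA r p α v0 x ≤ v1 x + α * M0 := by
    intro x
    apply Finset.sup'_le
    intro a ha
    have : r x a ≤ v1 x := Finset.le_sup' (r x) ha
    have h2 : α * ∑ y, p x a y * v0 y ≤ α * M0 :=
      mul_le_mul_of_nonneg_left (hsum_le x a ha) hα0
    linarith
  have hlb : ∀ x, v1 x + α * m0 ≤ bellman A hA r p α v0 x := by
    intro x
    obtain ⟨a, ha, hav⟩ := Finset.exists_mem_eq_sup' (hA x) (r x)
    have h1 : r x a + α * ∑ y, p x a y * v0 y ≤ bellman A hA r p α v0 x :=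
      Finset.le_sup' (fun a => r x a + α * ∑ y, p x a y * v0 y) ha
    have h2 : α * m0 ≤ α * ∑ y, p x a y * v0 y :=
      mul_le_mul_of_nonneg_left (hsum_ge x a ha) hα0
    have : v1 x = r x a := hav
    linarith
  have hsup : univ.sup' univ_nonempty (bellman A hA r p α v0)
      ≤ univ.sup' univ_nonempty v1 + α * M0 := by
    apply Finset.sup'_le
    intro x _
    exact le_trans (hub x) (by
      have : v1 x ≤ univ.sup' univ_nonempty v1 := Finset.le_sup' v1 (mem_univ x)
      linarith)
  have hinf : univ.inf' univ_nonempty v1 + α * m0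
      ≤ univ.inf' univ_nonempty (bellman A hA r p α v0) := by
    apply Finset.le_inf'
    intro x _
    refine le_trans ?_ (hlb x)
    have : univ.inf' univ_nonempty v1 ≤ v1 x := Finset.inf'_le v1 (mem_univ x)
    linarith
  simp only [sp]
  have := hsup
  have := hinf
  ring_nf
  nlinarith [hsup, hinf]
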